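/- Let $I_1$ and $I_2$ be monomial ideals in $R = K[x_1,\ldots,x_n]$ with disjoint supports, i.e., no variable divides both a minimal generator of $I_1$ and a minimal generator of $I_2$. Then $I_1 + I_2$ satisfies the strong persistence property (i.e., $((I_1+I_2)^{s+1} : (I_1+I_2)) = (I_1+I_2)^s$ for all $s \ge 1$) if and only if $I_1$ or $I_2$ satisfies the strong persistence property. -/

import Mathlib

open MvPolynomial

/-- The strong persistence property: `(I^{s+1} : I) = I^s` for all `s ≥ 1`. -/
def StrongPersistence {n : ℕ} {K : Type*} [Field K]
    (I : Ideal (MvPolynomial (Fin n) K)) : Prop :=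
  ∀ s : ℕ, 1 ≤ s → Submodule.colon (I ^ (s + 1)) I = I ^ s

namespace Stmt9Aux

variable {n : ℕ}

/-- `k`-fold sumset of a set of exponent vectors. -/
def sset (S : Set (Fin n →₀ ℕ)) : ℕ → Set (Fin n →₀ ℕ)
  | 0 => {0}
  | k + 1 => Set.image2 (· + ·) S (sset S k)

/-- `pp S a d` : some element of the `a`-fold sumset of `S` is `≤ d`. -/
def pp (S : Set (Fin n →₀ ℕ)) (a : ℕ) (d : Fin n →₀ ℕ) : Prop :=
  ∃ e ∈ sset S a, e ≤ d

/-- Combinatorial version of the strong persistence property. -/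
def SPc (S : Set (Fin n →₀ ℕ)) : Prop :=
  ∀ s : ℕ, 1 ≤ s → ∀ d, (∀ u ∈ S, pp S (s + 1) (d + u)) → pp S s d

/-! ### Basic facts about `sset` and `pp` -/

lemma zero_mem_sset {S : Set (Fin n →₀ ℕ)} (h : 0 ∈ S) : ∀ k, (0 : Fin n →₀ ℕ) ∈ sset S k
  | 0 => rfl
  | k + 1 => by
      have := zero_mem_sset h k
      exact ⟨0, h, 0, this, by simp⟩

lemma sset_mono {S T : Set (Fin n →₀ ℕ)} (hST : S ⊆ T) :
    ∀ k, ∀ e ∈ sset S k, e ∈ sset T k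
  | 0, e, he => he
  | k + 1, e, he => by
      obtain ⟨x, hx, e', he', rfl⟩ := he
      exact ⟨x, hST hx, e', sset_mono hST k e' he', rfl⟩

lemma add_mem_sset {S : Set (Fin n →₀ ℕ)} :
    ∀ {a b : ℕ} {e₁ e₂ : Fin n →₀ ℕ}, e₁ ∈ sset S a → e₂ ∈ sset S b →
      e₁ + e₂ ∈ sset S (a + b) := by
  intro a
  induction a with
  | zero =>
      intro b e₁ e₂ h1 h2
      have : e₁ = 0 := h1
      subst this
      simpa using h2
  | succ a ih =>
      intro b e₁ e₂ h1 h2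
      obtain ⟨x, hx, e', he', rfl⟩ := h1
      have : x + e' + e₂ = x + (e' + e₂) := by rw [add_assoc]
      rw [this]
      have hk : a + 1 + b = (a + b) + 1 := by omega
      rw [hk]
      exact ⟨x, hx, e' + e₂, ih he' h2, rfl⟩

lemma sset_union {S₁ S₂ : Set (Fin n →₀ ℕ)} :
    ∀ {k : ℕ} {e : Fin n →₀ ℕ}, e ∈ sset (S₁ ∪ S₂) k →
      ∃ a b, a + b = k ∧ ∃ e₁ ∈ sset S₁ a, ∃ e₂ ∈ sset S₂ b, e = e₁ + e₂ := by
  intro k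
  induction k with
  | zero =>
      intro e he
      exact ⟨0, 0, rfl, 0, rfl, 0, rfl, by have : e = 0 := he; simp [this]⟩
  | succ k ih =>
      intro e he
      obtain ⟨x, hx, e', he', rfl⟩ := he
      obtain ⟨a, b, hab, e₁, he₁, e₂, he₂, rfl⟩ := ih he'
      rcases hx with hx | hx
      · exact ⟨a + 1, b, by omega, x + e₁, ⟨x, hx, e₁, he₁, rfl⟩, e₂, he₂, by
          rw [add_assoc]⟩
      · refine ⟨a, b + 1, by omega, e₁, he₁, x + e₂, ⟨x, hx, e₂, he₂, rfl⟩, ?_⟩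
        show x + (e₁ + e₂) = e₁ + (x + e₂)
        rw [← add_assoc, add_comm x e₁, add_assoc]

lemma pp_zero (S : Set (Fin n →₀ ℕ)) (d : Fin n →₀ ℕ) : pp S 0 d :=
  ⟨0, rfl, zero_le⟩

lemma pp_succ {S : Set (Fin n →₀ ℕ)} {k : ℕ} {d : Fin n →₀ ℕ} (h : pp S (k + 1) d) :
    pp S k d := by
  obtain ⟨e, he, hle⟩ := h
  obtain ⟨x, _, e', he', rfl⟩ := he
  exact ⟨e', he', le_trans (le_add_self) hle⟩

lemma pp_anti {S : Set (Fin n →₀ ℕ)} {a b : ℕ} {d : Fin n →₀ ℕ} (hab : a ≤ b)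
    (h : pp S b d) : pp S a d := by
  obtain ⟨c, rfl⟩ := Nat.exists_eq_add_of_le hab
  clear hab
  induction c with
  | zero => simpa using h
  | succ c ih =>
      have : a + (c + 1) = (a + c) + 1 := by omega
      rw [this] at h
      exact ih (pp_succ h)

lemma pp_mono {S : Set (Fin n →₀ ℕ)} {a : ℕ} {d d' : Fin n →₀ ℕ} (hdd : d ≤ d')
    (h : pp S a d) : pp S a d' := by
  obtain ⟨e, he, hle⟩ := h
  exact ⟨e, he, le_trans hle hdd⟩

lemma pp_of_zero_mem {S : Set (Fin n →₀ ℕ)} (h : 0 ∈ S) (a : ℕ) (d : Fin n →₀ ℕ) :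
    pp S a d := ⟨0, zero_mem_sset h a, zero_le⟩

/-- elements of sumsets are supported inside the union of supports of `S`. -/
lemma sset_support {S : Set (Fin n →₀ ℕ)} :
    ∀ {k : ℕ} {e : Fin n →₀ ℕ}, e ∈ sset S k → ∀ v, e v ≠ 0 → ∃ x ∈ S, x v ≠ 0 := by
  intro k
  induction k with
  | zero =>
      intro e he v hv
      have : e = 0 := he
      subst this
      simp at hv
  | succ k ih =>
      intro e he v hv
      obtain ⟨x, hx, e', he', rfl⟩ := he
      rw [Finsupp.add_apply] at hv
      rcases Nat.eq_zero_or_pos (x v) with h0 | h0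
      · exact ih he' v (by omega)
      · exact ⟨x, hx, by omega⟩

/-- Strip off a part `y` of `d` whose support avoids the variables of `S`. -/
lemma pp_strip {S : Set (Fin n →₀ ℕ)} {a : ℕ} {x y : Fin n →₀ ℕ}
    (hy : ∀ v, (∃ z ∈ S, z v ≠ 0) → y v = 0) (h : pp S a (x + y)) : pp S a x := by
  obtain ⟨e, he, hle⟩ := h
  refine ⟨e, he, ?_⟩
  intro v
  rcases Nat.eq_zero_or_pos (e v) with h0 | h0
  · simp [h0]
  · have hv : ∃ z ∈ S, z v ≠ 0 := sset_support he v (by omega)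
    have := hle v
    rw [Finsupp.add_apply, hy v hv] at this
    omega

/-- degree of an exponent vector -/
def deg (d : Fin n →₀ ℕ) : ℕ := d.sum fun _ m => m

lemma deg_add (a b : Fin n →₀ ℕ) : deg (a + b) = deg a + deg b :=
  Finsupp.sum_add_index' (fun _ => rfl) (fun _ _ _ => rfl)

lemma deg_mono {a b : Fin n →₀ ℕ} (h : a ≤ b) : deg a ≤ deg b := by
  obtain ⟨c, rfl⟩ := le_iff_exists_add.mp h
  rw [deg_add]; omega

lemma deg_pos {e : Fin n →₀ ℕ} (h : e ≠ 0) : 1 ≤ deg e := by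
  obtain ⟨v, hv⟩ := Finsupp.ne_iff.mp h
  simp only [Finsupp.coe_zero, Pi.zero_apply] at hv
  have hmem : v ∈ e.support := Finsupp.mem_support_iff.mpr hv
  have : e v ≤ deg e := Finset.single_le_sum (f := fun v => e v) (fun _ _ => Nat.zero_le _) hmem
  omega

lemma sset_deg {S : Set (Fin n →₀ ℕ)} (h0 : (0 : Fin n →₀ ℕ) ∉ S) :
    ∀ {k : ℕ} {e : Fin n →₀ ℕ}, e ∈ sset S k → k ≤ deg e := by
  intro k
  induction k with
  | zero => intro e _; omega
  | succ k ih =>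
      intro e he
      obtain ⟨x, hx, e', he', rfl⟩ := he
      have hx0 : x ≠ 0 := fun h => h0 (h ▸ hx)
      have := deg_pos hx0
      have := ih he'
      rw [deg_add]; omega

lemma pp_bound {S : Set (Fin n →₀ ℕ)} (h0 : (0 : Fin n →₀ ℕ) ∉ S) {a : ℕ}
    {d : Fin n →₀ ℕ} (h : pp S a d) : a ≤ deg d := by
  obtain ⟨e, he, hle⟩ := h
  exact le_trans (sset_deg h0 he) (deg_mono hle)

lemma exists_max (P : ℕ → Prop) (h0 : P 0) (hN : ∃ N, ¬ P N) :
    ∃ j, P j ∧ ¬ P (j + 1) := by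
  by_contra h
  push_neg at h
  obtain ⟨N, hN⟩ := hN
  exact hN (Nat.rec h0 (fun k hk => h k hk) N)

section Disjoint

variable {S₁ S₂ : Set (Fin n →₀ ℕ)}
variable (hd : ∀ x₁ ∈ S₁, ∀ x₂ ∈ S₂, ∀ v, x₁ v ≠ 0 → x₂ v = 0)

include hd

/-- splitting of `pp` for the union, under disjointness. -/
lemma pp_union_iff {k : ℕ} {d : Fin n →₀ ℕ} :
    pp (S₁ ∪ S₂) k d ↔ ∃ a b, a + b = k ∧ pp S₁ a d ∧ pp S₂ b d := by
  constructor
  · rintro ⟨e, he, hle⟩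
    obtain ⟨a, b, hab, e₁, he₁, e₂, he₂, rfl⟩ := sset_union he
    exact ⟨a, b, hab, ⟨e₁, he₁, le_trans (le_add_self.trans (by rw [add_comm])) hle⟩,
      ⟨e₂, he₂, le_trans le_add_self hle⟩⟩
  · rintro ⟨a, b, rfl, ⟨e₁, he₁, hle₁⟩, ⟨e₂, he₂, hle₂⟩⟩
    refine ⟨e₁ + e₂, add_mem_sset (sset_mono Set.subset_union_left a e₁ he₁)
      (sset_mono Set.subset_union_right b e₂ he₂), ?_⟩
    intro v
    rw [Finsupp.add_apply]
    rcases Nat.eq_zero_or_pos (e₁ v) with h1 | h1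
    · have := hle₂ v; omega
    · have hv1 : ∃ x ∈ S₁, x v ≠ 0 := sset_support he₁ v (by omega)
      obtain ⟨x₁, hx₁, hx₁v⟩ := hv1
      have he₂v : e₂ v = 0 := by
        rcases Nat.eq_zero_or_pos (e₂ v) with h2 | h2
        · exact h2
        · obtain ⟨x₂, hx₂, hx₂v⟩ := sset_support he₂ v (by omega)
          exact absurd (hd x₁ hx₁ x₂ hx₂ v hx₁v) hx₂v
      have := hle₁ v; omega

/-- Adding a generator of `S₁` does not affect `pp S₂`. -/
lemma pp_add_gen {b : ℕ} {d u : Fin n →₀ ℕ} (hu : u ∈ S₁) (h : pp S₂ b (d + u)) :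
    pp S₂ b d := by
  refine pp_strip (fun v hv => ?_) h
  obtain ⟨x₂, hx₂, hx₂v⟩ := hv
  rcases Nat.eq_zero_or_pos (u v) with h0 | h0
  · exact h0
  · exact absurd (hd u hu x₂ hx₂ v (by omega)) hx₂v

end Disjoint

/-- Main combinatorial lemma, positive direction: if `S₁` has the combinatorial SP, so does
the union. -/
lemma comb_pos {S₁ S₂ : Set (Fin n →₀ ℕ)}
    (hd : ∀ x₁ ∈ S₁, ∀ x₂ ∈ S₂, ∀ v, x₁ v ≠ 0 → x₂ v = 0)
    (h02 : (0 : Fin n →₀ ℕ) ∉ S₂) (hSP : SPc S₁) : SPc (S₁ ∪ S₂) := by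
  intro s hs d hyp
  -- S₁ is nonempty
  obtain ⟨u₀, hu₀⟩ : S₁.Nonempty := by
    by_contra hne
    rw [Set.not_nonempty_iff_eq_empty] at hne
    subst hne
    obtain ⟨e, he, -⟩ := hSP 1 le_rfl 0 (by rintro u ⟨⟩)
    obtain ⟨x, hx, -⟩ := he
    exact hx
  -- maximal b with pp S₂ b d
  obtain ⟨j, hj, hj1⟩ := exists_max (fun b => pp S₂ b d) (pp_zero _ _)
    ⟨deg d + 1, fun h => by have := pp_bound h02 h; omega⟩
  rcases le_or_gt s j with hsj | hjs
  · exact (pp_union_iff hd).mpr ⟨0, s, by omega, pp_zero _ _, pp_anti hsj hj⟩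
  · -- j < s
    have key : ∀ u ∈ S₁, pp S₁ (s - j + 1) (d + u) := by
      intro u hu
      obtain ⟨a, b, hab, h1, h2⟩ := (pp_union_iff hd).mp (hyp u (Or.inl hu))
      have h2d : pp S₂ b d := pp_add_gen hd hu h2
      have hbj : b ≤ j := by
        by_contra hbj
        exact hj1 (pp_anti (by omega) h2d)
      exact pp_anti (by omega) h1
    have := hSP (s - j) (by omega) d key
    exact (pp_union_iff hd).mpr ⟨s - j, j, by omega, this, hj⟩

/-- failure of combinatorial SP, with a "pure" witness. -/
lemma spc_fail_pure {S₁ S₂ : Set (Fin n →₀ ℕ)}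
    (hd : ∀ x₁ ∈ S₁, ∀ x₂ ∈ S₂, ∀ v, x₁ v ≠ 0 → x₂ v = 0)
    (h01 : (0 : Fin n →₀ ℕ) ∉ S₁) (h : ¬ SPc S₁) :
    ∃ i : ℕ, ∃ d : Fin n →₀ ℕ, (∀ v, d v ≠ 0 → ∃ x ∈ S₁, x v ≠ 0) ∧
      pp S₁ i d ∧ ¬ pp S₁ (i + 1) d ∧ ∀ u ∈ S₁, pp S₁ (i + 2) (d + u) := by
  rw [SPc] at h
  push_neg at h
  obtain ⟨s, hs, d, hyp, hcon⟩ := h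
  classical
  -- purify d
  set V : Fin n → Prop := fun v => ∃ x ∈ S₁, x v ≠ 0 with hV
  set d' : Fin n →₀ ℕ := d.filter V with hd'
  have hpure : ∀ v, d' v ≠ 0 → ∃ x ∈ S₁, x v ≠ 0 := by
    intro v hv
    rw [hd', Finsupp.filter_apply] at hv
    by_cases hVv : V v
    · exact hVv
    · rw [if_neg hVv] at hv
      exact absurd rfl hv
  have hsplit : d = d' + d.filter (fun v => ¬ V v) := by
    rw [hd', Finsupp.filter_pos_add_filter_neg]
  have hrest : ∀ v, (∃ z ∈ S₁, z v ≠ 0) → (d.filter (fun v => ¬ V v)) v = 0 := by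
    intro v hv
    rw [Finsupp.filter_apply, if_neg]
    intro hnv
    exact hnv hv
  have hpp_iff : ∀ a e, pp S₁ a (d' + e) ↔ pp S₁ a (d + e) := by
    intro a e
    constructor
    · intro h
      refine pp_mono ?_ h
      have : d' ≤ d := by
        intro v
        rw [hd', Finsupp.filter_apply]
        split <;> simp
      exact add_le_add this le_rfl
    · intro h
      rw [hsplit, add_right_comm] at h
      exact pp_strip hrest h
  have hpp_iff0 : ∀ a, pp S₁ a d' ↔ pp S₁ a d := by
    intro a
    have := hpp_iff a 0
    simpa using this
  have hcon' : ¬ pp S₁ s d' := fun h => hcon ((hpp_iff0 s).mp h)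
  have hyp' : ∀ u ∈ S₁, pp S₁ (s + 1) (d' + u) := fun u hu =>
    (hpp_iff (s + 1) u).mpr (hyp u hu)
  -- maximal i with pp S₁ i d'
  obtain ⟨i, hi, hi1⟩ := exists_max (fun a => pp S₁ a d') (pp_zero _ _)
    ⟨deg d' + 1, fun h => by have := pp_bound h01 h; omega⟩
  have his : i < s := by
    by_contra hh
    exact hcon' (pp_anti (by omega) hi)
  refine ⟨i, d', hpure, hi, hi1, fun u hu => pp_anti (by omega) (hyp' u hu)⟩

/-- Main combinatorial lemma, negative direction. -/
lemma comb_neg {S₁ S₂ : Set (Fin n →₀ ℕ)}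
    (hd : ∀ x₁ ∈ S₁, ∀ x₂ ∈ S₂, ∀ v, x₁ v ≠ 0 → x₂ v = 0)
    (h01 : (0 : Fin n →₀ ℕ) ∉ S₁) (h02 : (0 : Fin n →₀ ℕ) ∉ S₂)
    (h1 : ¬ SPc S₁) (h2 : ¬ SPc S₂) : ¬ SPc (S₁ ∪ S₂) := by
  have hd' : ∀ x₂ ∈ S₂, ∀ x₁ ∈ S₁, ∀ v, x₂ v ≠ 0 → x₁ v = 0 := by
    intro x₂ hx₂ x₁ hx₁ v hv
    rcases Nat.eq_zero_or_pos (x₁ v) with h0 | h0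
    · exact h0
    · exact absurd (hd x₁ hx₁ x₂ hx₂ v (by omega)) hv
  obtain ⟨i, d₁, hpure₁, hi, hi1, hhyp₁⟩ := spc_fail_pure hd h01 h1
  obtain ⟨j, d₂, hpure₂, hj, hj1, hhyp₂⟩ := spc_fail_pure hd' h02 h2
  intro hSP
  set s := i + j + 1 with hs
  set d := d₁ + d₂ with hdd
  have hstrip₁ : ∀ a, pp S₁ a d → pp S₁ a d₁ := by
    intro a h
    refine pp_strip (fun v hv => ?_) h
    obtain ⟨x₁, hx₁, hx₁v⟩ := hv
    rcases Nat.eq_zero_or_pos (d₂ v) with h0 | h0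
    · exact h0
    · obtain ⟨x₂, hx₂, hx₂v⟩ := hpure₂ v (by omega)
      exact absurd (hd x₁ hx₁ x₂ hx₂ v hx₁v) hx₂v
  have hstrip₂ : ∀ b, pp S₂ b d → pp S₂ b d₂ := by
    intro b h
    rw [hdd, add_comm d₁ d₂] at h
    refine pp_strip (fun v hv => ?_) h
    obtain ⟨x₂, hx₂, hx₂v⟩ := hv
    rcases Nat.eq_zero_or_pos (d₁ v) with h0 | h0
    · exact h0
    · obtain ⟨x₁, hx₁, hx₁v⟩ := hpure₁ v (by omega)
      exact absurd (hd x₁ hx₁ x₂ hx₂ v hx₁v) hx₂v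
  have hyp : ∀ u ∈ S₁ ∪ S₂, pp (S₁ ∪ S₂) (s + 1) (d + u) := by
    rintro u (hu | hu)
    · refine (pp_union_iff hd).mpr ⟨i + 2, j, by omega, ?_, ?_⟩
      · have := hhyp₁ u hu
        refine pp_mono ?_ this
        intro v
        rw [hdd]
        simp only [Finsupp.add_apply]
        omega
      · exact pp_mono (by intro v; rw [hdd]; simp only [Finsupp.add_apply]; omega) hj
    · refine (pp_union_iff hd).mpr ⟨i, j + 2, by omega, ?_, ?_⟩
      · exact pp_mono (by intro v; rw [hdd]; simp only [Finsupp.add_apply]; omega) hi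
      · have := hhyp₂ u hu
        refine pp_mono ?_ this
        intro v
        rw [hdd]
        simp only [Finsupp.add_apply]
        omega
  have := hSP s (by omega) d hyp
  obtain ⟨a, b, hab, ha, hb⟩ := (pp_union_iff hd).mp this
  have ha' : a ≤ i := by
    by_contra hh
    exact hi1 (pp_anti (by omega) (hstrip₁ a ha))
  have hb' : b ≤ j := by
    by_contra hh
    exact hj1 (pp_anti (by omega) (hstrip₂ b hb))
  omega

/-- Full combinatorial theorem. -/
lemma comb_main {S₁ S₂ : Set (Fin n →₀ ℕ)}
    (hd : ∀ x₁ ∈ S₁, ∀ x₂ ∈ S₂, ∀ v, x₁ v ≠ 0 → x₂ v = 0) :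
    SPc (S₁ ∪ S₂) ↔ SPc S₁ ∨ SPc S₂ := by
  have hd' : ∀ x₂ ∈ S₂, ∀ x₁ ∈ S₁, ∀ v, x₂ v ≠ 0 → x₁ v = 0 := by
    intro x₂ hx₂ x₁ hx₁ v hv
    rcases Nat.eq_zero_or_pos (x₁ v) with h0 | h0
    · exact h0
    · exact absurd (hd x₁ hx₁ x₂ hx₂ v (by omega)) hv
  by_cases h01 : (0 : Fin n →₀ ℕ) ∈ S₁
  · constructor
    · intro _; left; intro s _ d _; exact pp_of_zero_mem h01 s d
    · intro _; intro s _ d _; exact pp_of_zero_mem (Or.inl h01) s d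
  by_cases h02 : (0 : Fin n →₀ ℕ) ∈ S₂
  · constructor
    · intro _; right; intro s _ d _; exact pp_of_zero_mem h02 s d
    · intro _; intro s _ d _; exact pp_of_zero_mem (Or.inr h02) s d
  constructor
  · intro h
    by_contra hh
    push_neg at hh
    exact comb_neg hd h01 h02 hh.1 hh.2 h
  · rintro (h | h)
    · exact comb_pos hd h02 h
    · rw [Set.union_comm]
      exact comb_pos hd' h01 h

/-! ### Bridging algebra and combinatorics -/

variable {K : Type*} [Field K]

/-- The monomial ideal generated by a set of exponent vectors. -/
noncomputable def mSpan (K : Type*) [Field K] (S : Set (Fin n →₀ ℕ)) :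
    Ideal (MvPolynomial (Fin n) K) :=
  Ideal.span ((fun d => (monomial d (1 : K) : MvPolynomial (Fin n) K)) '' S)

lemma mem_mSpan {S : Set (Fin n →₀ ℕ)} {f : MvPolynomial (Fin n) K} :
    f ∈ mSpan K S ↔ ∀ d ∈ f.support, ∃ e ∈ S, e ≤ d :=
  mem_ideal_span_monomial_image

lemma monomial_mem_mSpan {S : Set (Fin n →₀ ℕ)} {d : Fin n →₀ ℕ} :
    (monomial d (1 : K)) ∈ mSpan K S ↔ ∃ e ∈ S, e ≤ d := by
  rw [mem_mSpan]
  constructor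
  · intro h
    refine h d ?_
    rw [MvPolynomial.mem_support_iff, coeff_monomial]
    simp
  · intro h c hc
    rw [MvPolynomial.mem_support_iff, coeff_monomial] at hc
    by_cases hdc : d = c
    · exact hdc ▸ h
    · simp [hdc] at hc

lemma mSpan_add (S T : Set (Fin n →₀ ℕ)) :
    mSpan K S + mSpan K T = mSpan K (S ∪ T) := by
  rw [mSpan, mSpan, mSpan, Set.image_union, Ideal.span_union]
  rfl

lemma mSpan_mul (S T : Set (Fin n →₀ ℕ)) :
    mSpan K S * mSpan K T = mSpan K (Set.image2 (· + ·) S T) := by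
  rw [mSpan, mSpan, mSpan, Ideal.span_mul_span']
  congr 1
  rw [← Set.image2_mul, Set.image2_image_left, Set.image2_image_right, Set.image_image2]
  exact Set.image2_congr' fun a b => by rw [monomial_mul, one_mul]

lemma mSpan_pow (S : Set (Fin n →₀ ℕ)) (k : ℕ) :
    mSpan K S ^ k = mSpan K (sset S k) := by
  induction k with
  | zero =>
      rw [pow_zero, sset]
      rw [mSpan]
      simp only [Set.image_singleton]
      rw [MvPolynomial.monomial_zero', MvPolynomial.C_1, Ideal.span_singleton_one,
        Ideal.one_eq_top]
  | succ k ih =>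
      rw [pow_succ, ih, mul_comm, mSpan_mul]
      rfl

lemma mem_colon_mSpan {S : Set (Fin n →₀ ℕ)} {N : Ideal (MvPolynomial (Fin n) K)}
    {f : MvPolynomial (Fin n) K} :
    f ∈ Submodule.colon N (mSpan K S) ↔ ∀ u ∈ S, f * monomial u 1 ∈ N := by
  rw [Submodule.mem_colon]
  constructor
  · intro h u hu
    have : (monomial u (1 : K)) ∈ mSpan K S :=
      Ideal.subset_span ⟨u, hu, rfl⟩
    simpa [smul_eq_mul] using h _ this
  · intro h p hp
    rw [mSpan] at hp
    induction hp using Submodule.span_induction with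
    | mem x hx =>
        obtain ⟨u, hu, rfl⟩ := hx
        simpa [smul_eq_mul] using h u hu
    | zero => simp
    | add x y _ _ hx hy =>
        rw [smul_add]
        exact N.add_mem hx hy
    | smul r x _ hx =>
        rw [smul_comm]
        exact N.smul_mem r hx

/-- support of `f * monomial u 1` -/
lemma mem_support_mul_monomial {f : MvPolynomial (Fin n) K} {u c : Fin n →₀ ℕ} :
    c ∈ (f * monomial u (1 : K)).support ↔ ∃ b ∈ f.support, c = b + u := by
  rw [MvPolynomial.mem_support_iff, coeff_mul_monomial']
  constructor
  · intro h
    split_ifs at h with hle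
    · refine ⟨c - u, ?_, ?_⟩
      · rw [MvPolynomial.mem_support_iff]
        intro hc
        rw [hc] at h
        simp at h
      · rw [tsub_add_cancel_of_le hle]
    · simp at h
  · rintro ⟨b, hb, rfl⟩
    rw [if_pos le_add_self]
    rw [MvPolynomial.mem_support_iff] at hb
    simpa using hb

lemma SP_iff_SPc (S : Set (Fin n →₀ ℕ)) :
    StrongPersistence (mSpan K S) ↔ SPc S := by
  constructor
  · intro h s hs d hyp
    have heq := h s hs
    rw [mSpan_pow, mSpan_pow] at heq
    have hmem : (monomial d (1 : K)) ∈ Submodule.colon (mSpan K (sset S (s + 1)))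
        (mSpan K S) := by
      rw [mem_colon_mSpan]
      intro u hu
      rw [monomial_mul, one_mul]
      exact monomial_mem_mSpan.mpr (hyp u hu)
    rw [heq] at hmem
    exact monomial_mem_mSpan.mp hmem
  · intro h s hs
    rw [mSpan_pow, mSpan_pow]
    apply le_antisymm
    · intro f hf
      rw [mem_colon_mSpan] at hf
      rw [mem_mSpan]
      intro c hc
      apply h s hs c
      intro u hu
      have := hf u hu
      rw [mem_mSpan] at this
      exact this (c + u) (mem_support_mul_monomial.mpr ⟨c, hc, rfl⟩)
    · intro f hf
      rw [mem_mSpan] at hf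
      rw [mem_colon_mSpan]
      intro u hu
      rw [mem_mSpan]
      intro c hc
      obtain ⟨b, hb, rfl⟩ := mem_support_mul_monomial.mp hc
      obtain ⟨e, he, hle⟩ := hf b hb
      exact ⟨e + u, add_mem_sset he (by exact ⟨u, hu, 0, rfl, by simp⟩ :
        u ∈ sset S 1), add_le_add hle le_rfl⟩

end Stmt9Aux

open Stmt9Aux

/-- For monomial ideals `I₁, I₂` with disjoint supports, `I₁ + I₂` has the
strong persistence property iff `I₁` or `I₂` does. -/
theorem stmt9 {n : ℕ} {K : Type*} [Field K]
    (I₁ I₂ : Ideal (MvPolynomial (Fin n) K))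
    (S₁ S₂ : Set (Fin n →₀ ℕ))
    (h₁ : I₁ = Ideal.span ((fun d => (monomial d (1 : K) : MvPolynomial (Fin n) K)) '' S₁))
    (h₂ : I₂ = Ideal.span ((fun d => (monomial d (1 : K) : MvPolynomial (Fin n) K)) '' S₂))
    (hdisj : ∀ d₁ ∈ S₁, ∀ d₂ ∈ S₂, Disjoint d₁.support d₂.support) :
    StrongPersistence (I₁ + I₂) ↔ StrongPersistence I₁ ∨ StrongPersistence I₂ := by
  have h₁' : I₁ = mSpan K S₁ := h₁
  have h₂' : I₂ = mSpan K S₂ := h₂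
  subst h₁' h₂'
  rw [mSpan_add, SP_iff_SPc, SP_iff_SPc, SP_iff_SPc]
  apply comb_main
  intro x₁ hx₁ x₂ hx₂ v hv
  have := hdisj x₁ hx₁ x₂ hx₂
  rw [Finset.disjoint_left] at this
  by_contra h2
  exact this (Finsupp.mem_support_iff.mpr hv) (Finsupp.mem_support_iff.mpr h2)
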